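/- For all i,j ∈ {1,…,r}, λ,ω ∈ Ω₁, and X ∈ t, one has R(p^(j)_ω) = ε_{j,ω} and (D_X(p^(j)_ω))(U_{i,λ}) = δ_{i,j}δ_{λ,ω}. -/

import Mathlib

open scoped TensorProduct
open MvPolynomial

/-- The ideal `⟨t^ω : ω ≰ μ⟩` of `F[t₁,…,t_ℓ]`. -/
noncomputable def truncIdeal (F : Type*) [Field F] {ℓ : ℕ} (μ : Fin ℓ → ℕ) :
    Ideal (MvPolynomial (Fin ℓ) F) :=
  Ideal.span ((fun ω : Fin ℓ → ℕ =>
    MvPolynomial.monomial (Finsupp.equivFunOnFinite.symm ω) (1 : F)) '' {ω | ¬ ω ≤ μ})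

/-- The truncated polynomial algebra `A = F[t₁,…,t_ℓ]/⟨t^ω : ω ≰ μ⟩`. -/
noncomputable abbrev trunc (F : Type*) [Field F] {ℓ : ℕ} (μ : Fin ℓ → ℕ) : Type _ :=
  MvPolynomial (Fin ℓ) F ⧸ truncIdeal F μ

/-- The Lie algebra structure over `F` on `A ⊗[F] g`. -/
noncomputable instance tensorLieAlgebra {F : Type*} [Field F] {A : Type*} [CommRing A]
    [Algebra F A] {g : Type*} [LieRing g] [LieAlgebra F g] :
    LieAlgebra F (A ⊗[F] g) where
  lie_smul t x y := by
    rw [← algebraMap_smul A t y, lie_smul, algebraMap_smul]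

/-- The centralizer `L^x = {y ∈ L : ⁅x, y⁆ = 0}` of an element `x` of a Lie algebra. -/
noncomputable def cent (F : Type*) [Field F] (L : Type*) [LieRing L] [LieAlgebra F L]
    (x : L) : Submodule F L where
  carrier := {y | ⁅x, y⁆ = 0}
  add_mem' := by
    intro a b ha hb
    simp only [Set.mem_setOf_eq] at *
    rw [lie_add, ha, hb, add_zero]
  zero_mem' := by simp
  smul_mem' := by
    intro c a ha
    simp only [Set.mem_setOf_eq] at *
    rw [lie_smul, ha, smul_zero]

/-- An element of a finite-dimensional Lie algebra is regular if its centralizer has the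
minimal possible dimension. -/
def isRegular (F : Type*) [Field F] (L : Type*) [LieRing L] [LieAlgebra F L]
    (x : L) : Prop :=
  Module.finrank F (cent F L x) = sInf (Set.range fun z : L => Module.finrank F (cent F L z))

/-- The exponential of a (nilpotent) endomorphism of a finite-dimensional space in
characteristic zero: `exp N = ∑_{n ≤ dim} N^n / n!` (when `N` is nilpotent, all terms of
the series beyond the dimension vanish). -/
noncomputable def expEnd {F : Type*} [Field F] {M : Type*} [AddCommGroup M] [Module F M]
    (N : Module.End F M) : Module.End F M :=
  ∑ n ∈ Finset.range (Module.finrank F M + 1), ((n.factorial : F)⁻¹) • N ^ n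

/-- `reach F L X Y` holds if `Y` is obtained from `X` by applying an element of the
adjoint group of `L`, i.e. a finite composition of automorphisms `exp (ad N)` with
`ad N` nilpotent. -/
def reach (F : Type*) [Field F] (L : Type*) [LieRing L] [LieAlgebra F L]
    (X Y : L) : Prop :=
  ∃ l : List L, (∀ N ∈ l, IsNilpotent ((LieAlgebra.ad F L N : Module.End F L)))
    ∧ l.foldr (fun N v => expEnd (LieAlgebra.ad F L N : Module.End F L) v) X = Y

/-- The subspace `g^{x₋} ⊗ A` of `A ⊗ g`. -/
noncomputable def centSub (F : Type*) [Field F] {A : Type*} [CommRing A] [Algebra F A]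
    {g : Type*} [LieRing g] [LieAlgebra F g] (xm : g) : Submodule F (A ⊗[F] g) :=
  LinearMap.range (TensorProduct.map (LinearMap.id : A →ₗ[F] A) (cent F g xm).subtype)

/-- The transversal slice `t = x₊ ⊗ 1 + g^{x₋} ⊗ A ⊆ g ⊗ A`. -/
def tSlice (F : Type*) [Field F] {A : Type*} [CommRing A] [Algebra F A]
    {g : Type*} [LieRing g] [LieAlgebra F g] (xp xm : g) : Set (A ⊗[F] g) :=
  {Z | Z - (1 : A) ⊗ₜ[F] xp ∈ centSub F xm}


/-- The extension of the assignment `X j ↦ v j` on variables to a derivation of the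
polynomial ring: `p ↦ ∑ j, v j * ∂p/∂X j`. -/
noncomputable def extDer {R : Type*} [CommSemiring R] {σ : Type*} [Fintype σ]
    (v : σ → MvPolynomial σ R) (p : MvPolynomial σ R) : MvPolynomial σ R :=
  ∑ j, v j * pderiv j p

/-- The coadjoint action of `x ∈ g` on `S(g*) = MvPolynomial ι F` (the variable `X i`
corresponding to the coordinate function `bg.coord i`), described by its values on
variables: `x · (bg.coord i) = ∑ j, (bg.coord i ⁅bg j, x⁆) (bg.coord j)`. -/
noncomputable def vCoad {F : Type*} [Field F] {g : Type*} [LieRing g] [LieAlgebra F g]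
    {ι : Type*} [Fintype ι] (bg : Module.Basis ι F g) (x : g) : ι → MvPolynomial ι F :=
  fun i => ∑ j, (bg.repr ⁅bg j, x⁆ i) • X j

/-- The algebra homomorphism `S(g*) → S((g ⊗ A)*)` induced by `f ↦ ∑_{γ ≤ μ} f ⊗ ε^γ`.
Here `S(g*)` is modeled as `MvPolynomial ι F` (variables = coordinate functions for the
basis `bg` of `g`) and `S((g ⊗ A)*) = S(g* ⊗ A*)` as
`MvPolynomial (↥(Finset.Iic μ) × ι) F` (the variable `X (γ, i)` corresponding to
`bg.coord i ⊗ ε^γ`, the coordinate function dual to the basis vector `τ^γ ⊗ bg i` of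
`A ⊗ g`). -/
noncomputable def toSA (F : Type*) [Field F] {ℓ : ℕ} (μ : Fin ℓ → ℕ) (ι : Type*) :
    MvPolynomial ι F →ₐ[F] MvPolynomial (↥(Finset.Iic μ) × ι) F :=
  aeval (fun i => ∑ ω : ↥(Finset.Iic μ), X (ω, i))

/-- For `p ∈ S(g*)` and `ω ∈ ℕ^ℓ`, the polynomial `p_ω ∈ S((g ⊗ A)*)`: the component of
degree `-ω` (in the `ℤ^ℓ`-grading in which `ε^γ` has degree `-γ`, i.e. the component of
weight `ω` when the variable `X (γ, i)` is assigned weight `γ ∈ ℕ^ℓ`) of the image of `p`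
under `toSA`. -/
noncomputable def pAComp (F : Type*) [Field F] {ℓ : ℕ} (μ : Fin ℓ → ℕ) {ι : Type*}
    (p : MvPolynomial ι F) (ω : Fin ℓ → ℕ) : MvPolynomial (↥(Finset.Iic μ) × ι) F :=
  weightedHomogeneousComponent (fun z : ↥(Finset.Iic μ) × ι => (z.1 : Fin ℓ → ℕ)) ω
    (toSA F μ ι p)

/-- The directional derivative `(D_X P)(Y) = d/dt|₀ P(X + tY) = ∑_z ∂_z P(X) · Y_z` of a
polynomial function `P` on a space `L` (with basis `bM`) at the point `X` in the
direction `Y`.  This is the value at `Y` of `D_f(P)`, where `D_f : S(L*) → L*` is the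
unique `f`-derivation with `D_f = id` on `L*` and `f` is evaluation at `X`. -/
noncomputable def dirDeriv {F : Type*} [Field F] {L : Type*} [AddCommGroup L] [Module F L]
    {ζ : Type*} [Fintype ζ] (bM : Module.Basis ζ F L) (P : MvPolynomial ζ F) (Xv Yv : L) : F :=
  ∑ z, (eval (fun w => bM.repr Xv w) (pderiv z P)) * (bM.repr Yv z)

/-- The subalgebra of polynomials killed by each member of a family of derivations
(each derivation given by its values `v t : σ → MvPolynomial σ R` on variables);
this models the invariants of a Lie algebra action extended by derivations. -/
noncomputable def invAlg {R : Type*} [CommRing R] {σ : Type*} [Fintype σ]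
    {ξ : Type*} (v : ξ → σ → MvPolynomial σ R) : Subalgebra R (MvPolynomial σ R) where
  carrier := {q | ∀ t : ξ, extDer (v t) q = 0}
  mul_mem' := by
    intro a b ha hb t
    have hmul : ∀ j, v t j * pderiv j (a * b)
        = b * (v t j * pderiv j a) + a * (v t j * pderiv j b) := by
      intro j; rw [pderiv_mul]; ring
    simp only [extDer] at *
    rw [Finset.sum_congr rfl (fun j _ => hmul j), Finset.sum_add_distrib, ← Finset.mul_sum,
      ← Finset.mul_sum, ha t, hb t]
    simp
  add_mem' := by
    intro a b ha hb t
    simp only [extDer, map_add, mul_add, Finset.sum_add_distrib] at *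
    rw [ha t, hb t]; simp
  algebraMap_mem' := by
    intro r t
    simp [extDer, algebraMap_eq]


section AuxLemmas

open MvPolynomial

private lemma prod_monomial' {σ R τ : Type*} [CommSemiring R] (s : Finset τ)
    (e : τ → (σ →₀ ℕ)) (c : τ → R) :
    ∏ z ∈ s, MvPolynomial.monomial (e z) (c z)
      = MvPolynomial.monomial (∑ z ∈ s, e z) (∏ z ∈ s, c z) := by
  induction s using Finset.cons_induction with
  | empty => simp [MvPolynomial.monomial_zero']
  | cons a s ha ih => simp [Finset.prod_cons, Finset.sum_cons, ih, MvPolynomial.monomial_mul]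

private lemma eval_aeval' {F : Type*} [CommSemiring F] {σ τ : Type*} (f : τ → F)
    (g : σ → MvPolynomial τ F) (P : MvPolynomial σ F) :
    eval f (aeval g P) = eval (fun i => eval f (g i)) P := by
  induction P using MvPolynomial.induction_on with
  | C r => simp
  | add p q hp hq => simp only [map_add, hp, hq]
  | mul_X p n hp => simp only [map_mul, aeval_X, eval_mul, eval_X, hp]

private lemma aeval_linear_eval {F : Type*} [CommSemiring F] {σ : Type*} (a b : σ → F)
    (P : MvPolynomial σ F) (t : F) :
    Polynomial.eval t (MvPolynomial.aeval
        (fun z => Polynomial.C (a z) + Polynomial.C (b z) * Polynomial.X) P)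
      = eval (fun z => a z + b z * t) P := by
  induction P using MvPolynomial.induction_on with
  | C r => simp
  | add p q hp hq => simp only [map_add, Polynomial.eval_add, hp, hq]
  | mul_X p n hp => simp only [map_mul, aeval_X, Polynomial.eval_mul, Polynomial.eval_add,
      Polynomial.eval_C, Polynomial.eval_X, eval_mul, eval_X, hp]

private lemma coeff_one_aeval_linear {F : Type*} [CommRing F] {σ : Type*} [Fintype σ]
    [DecidableEq σ] (a b : σ → F) (P : MvPolynomial σ F) :
    (MvPolynomial.aeval
        (fun z => Polynomial.C (a z) + Polynomial.C (b z) * Polynomial.X) P).coeff 1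
      = ∑ z, eval a (pderiv z P) * b z := by
  induction P using MvPolynomial.induction_on with
  | C r => simp
  | add p q hp hq =>
    simp only [map_add, Polynomial.coeff_add, hp, hq, ← Finset.sum_add_distrib, map_add,
      add_mul]
  | mul_X p n hp =>
    have h0 : (MvPolynomial.aeval
        (fun z => Polynomial.C (a z) + Polynomial.C (b z) * Polynomial.X) p).coeff 0
        = eval a p := by
      rw [Polynomial.coeff_zero_eq_eval_zero, aeval_linear_eval]
      simp
    rw [map_mul, aeval_X, mul_add, Polynomial.coeff_add, Polynomial.coeff_mul_C,
      show (1:ℕ) = 0 + 1 from rfl]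
    rw [← mul_assoc, Polynomial.coeff_mul_X, Polynomial.coeff_mul_C, h0, hp]
    have : ∀ z : σ, eval a (pderiv z (p * X n)) * b z
        = (eval a (pderiv z p) * b z) * a n + eval a p * (if z = n then b z else 0) := by
      intro z
      rw [pderiv_mul, pderiv_X]
      rcases eq_or_ne z n with rfl | hz
      · simp; ring
      · simp [Pi.single_apply, hz]; ring
    rw [Finset.sum_congr rfl fun z _ => this z, Finset.sum_add_distrib, ← Finset.sum_mul]
    simp [mul_ite, Finset.sum_ite_eq']

private lemma whc_monomial {F : Type*} [CommSemiring F] {σ : Type*} {ℓ : ℕ}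
    (wt : σ → (Fin ℓ → ℕ)) (ω : Fin ℓ → ℕ) (d : σ →₀ ℕ) (r : F) :
    weightedHomogeneousComponent wt ω (monomial d r)
      = if Finsupp.weight wt d = ω then monomial d r else 0 := by
  classical
  ext e
  rw [coeff_weightedHomogeneousComponent]
  rcases eq_or_ne e d with rfl | he
  · split <;> simp [coeff_monomial]
  · by_cases h : Finsupp.weight wt e = ω <;>
      split <;> split <;> simp_all [coeff_monomial, Ne.symm he]

private lemma coeff_aeval_whc {F : Type*} [CommSemiring F] {σ : Type*} [Fintype σ] {ℓ : ℕ}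
    (wt : σ → (Fin ℓ → ℕ)) (a : σ → F) (ω : Fin ℓ → ℕ) (P : MvPolynomial σ F) :
    MvPolynomial.coeff (Finsupp.equivFunOnFinite.symm ω)
      (MvPolynomial.aeval
        (fun z => MvPolynomial.monomial (R := F) (Finsupp.equivFunOnFinite.symm (wt z)) (a z)) P)
      = eval a (weightedHomogeneousComponent wt ω P) := by
  classical
  induction P using MvPolynomial.induction_on' with
  | add p q hp hq => simp only [map_add, MvPolynomial.coeff_add, hp, hq]
  | monomial d r =>
    rw [aeval_monomial, whc_monomial,
      Finsupp.prod_fintype _ _ (fun z => by simp),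
      show (fun z : σ => (monomial (Finsupp.equivFunOnFinite.symm (wt z))) (a z) ^ d z)
        = fun z : σ => monomial (d z • Finsupp.equivFunOnFinite.symm (wt z)) (a z ^ d z)
        from funext fun z => monomial_pow,
      prod_monomial', algebraMap_eq, C_mul_monomial, coeff_monomial]
    have hsum : (∑ z : σ, d z • Finsupp.equivFunOnFinite.symm (wt z))
        = Finsupp.equivFunOnFinite.symm (∑ z : σ, d z • wt z) := by
      ext x
      simp [Finsupp.finset_sum_apply, Finset.sum_apply]
    have hw : Finsupp.weight wt d = ∑ z : σ, d z • wt z := by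
      rw [Finsupp.weight_apply, Finsupp.sum_fintype _ _ (fun z => by simp)]
    rw [hsum, hw]
    have hiff : (Finsupp.equivFunOnFinite.symm (∑ z : σ, d z • wt z)
        = Finsupp.equivFunOnFinite.symm ω) ↔ ((∑ z : σ, d z • wt z) = ω) :=
      Finsupp.equivFunOnFinite.symm.injective.eq_iff
    by_cases h : (∑ z : σ, d z • wt z) = ω
    · rw [if_pos (hiff.mpr h), if_pos h, eval_monomial,
        Finsupp.prod_fintype _ _ (fun z => by simp)]
    · rw [if_neg (fun hh => h (hiff.mp hh)), if_neg h, map_zero]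

end AuxLemmas

private lemma key_eval {F : Type*} [Field F] [CharZero F] {g : Type*} [AddCommGroup g]
    [Module F g] {ι : Type*} [Fintype ι] (bg : Module.Basis ι F g) {ℓ : ℕ} (μ : Fin ℓ → ℕ) (xp : g)
    {r : ℕ} (u : Fin r → g) (pj : MvPolynomial ι F) (j : Fin r)
    (hnorm : ∀ c : Fin r → F, eval (fun i => bg.repr (xp + ∑ m, c m • u m) i) pj = c j)
    (c' : Fin r × ↥(Finset.Iic μ) → F) (ω : ↥(Finset.Iic μ)) :
    eval (fun z : ↥(Finset.Iic μ) × ι =>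
        (if z.1 = (⟨0, Finset.mem_Iic.mpr (zero_le : (0 : Fin ℓ → ℕ) ≤ μ)⟩ : ↥(Finset.Iic μ)) then bg.repr xp z.2
          else 0) + ∑ m, c' (m, z.1) * bg.repr (u m) z.2)
      (pAComp F μ pj (ω : Fin ℓ → ℕ)) = c' (j, ω) := by
  classical
  set o : ↥(Finset.Iic μ) := ⟨0, Finset.mem_Iic.mpr (zero_le : (0 : Fin ℓ → ℕ) ≤ μ)⟩ with ho
  set a : ↥(Finset.Iic μ) × ι → F := fun z =>
    (if z.1 = o then bg.repr xp z.2 else 0) + ∑ m, c' (m, z.1) * bg.repr (u m) z.2 with ha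
  rw [pAComp, ← coeff_aeval_whc]
  set χ : MvPolynomial (↥(Finset.Iic μ) × ι) F →ₐ[F] MvPolynomial (Fin ℓ) F :=
    aeval (fun z : ↥(Finset.Iic μ) × ι =>
      MvPolynomial.monomial (R := F) (Finsupp.equivFunOnFinite.symm (z.1 : Fin ℓ → ℕ)) (a z))
    with hχ
  set Ψ : MvPolynomial ι F →ₐ[F] MvPolynomial (Fin r) F :=
    aeval (fun w => C (bg.repr xp w) + ∑ m, C (bg.repr (u m) w) * X m) with hΨ
  set E : MvPolynomial (Fin r) F →ₐ[F] MvPolynomial (Fin ℓ) F :=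
    aeval (fun m => ∑ γ : ↥(Finset.Iic μ),
      MvPolynomial.monomial (R := F) (Finsupp.equivFunOnFinite.symm (γ : Fin ℓ → ℕ))
        (c' (m, γ))) with hE
  have hcomp : χ.comp (toSA F μ ι) = E.comp Ψ := by
    apply MvPolynomial.algHom_ext
    intro w
    simp only [AlgHom.comp_apply, toSA, aeval_X, hχ, hΨ, hE, map_add, map_sum, map_mul,
      aeval_C]
    have h1 : ∀ γ : ↥(Finset.Iic μ),
        MvPolynomial.monomial (R := F) (Finsupp.equivFunOnFinite.symm (γ : Fin ℓ → ℕ))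
          (a (γ, w))
        = MvPolynomial.monomial (R := F) (Finsupp.equivFunOnFinite.symm (γ : Fin ℓ → ℕ))
            (if γ = o then bg.repr xp w else 0)
          + ∑ m, MvPolynomial.monomial (R := F)
              (Finsupp.equivFunOnFinite.symm (γ : Fin ℓ → ℕ)) (c' (m, γ) * bg.repr (u m) w) := by
      intro γ
      rw [ha]
      simp only [← map_sum (monomial _), ← map_add (monomial _)]
    rw [Finset.sum_congr rfl fun γ _ => h1 γ, Finset.sum_add_distrib]
    congr 1
    · rw [Finset.sum_congr rfl (fun γ _ => by
        rw [show (MvPolynomial.monomial (R := F)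
            (Finsupp.equivFunOnFinite.symm (γ : Fin ℓ → ℕ)) (if γ = o then bg.repr xp w else 0))
          = if γ = o then (MvPolynomial.monomial (R := F)
            (Finsupp.equivFunOnFinite.symm (γ : Fin ℓ → ℕ)) (bg.repr xp w)) else 0 from by
            split <;> simp])]
      rw [Finset.sum_ite_eq' Finset.univ o]
      have : ((o : Fin ℓ → ℕ)) = 0 := rfl
      simp only [Finset.mem_univ, if_true, this]
      rw [show Finsupp.equivFunOnFinite.symm (0 : Fin ℓ → ℕ) = 0 from by ext x; simp]
      rw [algebraMap_eq, C_apply]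
    · rw [Finset.sum_comm]
      refine Finset.sum_congr rfl fun m _ => ?_
      rw [Finset.mul_sum]
      refine Finset.sum_congr rfl fun γ _ => ?_
      rw [algebraMap_eq, C_mul_monomial, mul_comm]
  have hΨp : Ψ pj = X j := by
    apply MvPolynomial.funext
    intro cv
    rw [hΨ, eval_aeval']
    have : (fun w => eval cv (C (bg.repr xp w) + ∑ m, C (bg.repr (u m) w) * X m))
        = fun w => bg.repr (xp + ∑ m, cv m • u m) w := by
      funext w
      simp [Finsupp.add_apply, Finsupp.finset_sum_apply, mul_comm]
    rw [this, hnorm cv, eval_X]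
  have hker : χ (toSA F μ ι pj) = E (X j) := by
    have := congrArg (fun (f : MvPolynomial ι F →ₐ[F] MvPolynomial (Fin ℓ) F) => f pj) hcomp
    simpa [hΨp] using this
  rw [hker, hE, aeval_X, MvPolynomial.coeff_sum]
  have hcoe : ∀ γ : ↥(Finset.Iic μ),
      coeff (Finsupp.equivFunOnFinite.symm (ω : Fin ℓ → ℕ))
        ((MvPolynomial.monomial (R := F) (Finsupp.equivFunOnFinite.symm (γ : Fin ℓ → ℕ)))
          (c' (j, γ)))
      = if γ = ω then c' (j, γ) else 0 := by
    intro γ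
    rcases eq_or_ne γ ω with rfl | h
    · simp [coeff_monomial]
    · rw [coeff_monomial, if_neg, if_neg h]
      intro hc
      exact h (Subtype.ext (Finsupp.equivFunOnFinite.symm.injective hc))
  rw [Finset.sum_congr rfl fun γ _ => hcoe γ, Finset.sum_ite_eq' Finset.univ ω]
  simp

set_option synthInstance.maxHeartbeats 1000000 in
set_option maxHeartbeats 4000000 in
/-- In the semisimple setting (`F` algebraically closed of
characteristic zero, `g` semisimple with principal `sl₂`-triple `(x₊, x₋, h)`,
`A = F[t₁,…,t_ℓ]/⟨t^ω : ω ≰ μ⟩` with monomial basis `bA` indexed by `Ω₁ = {ω : ω ≤ μ}`,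
`(u₁,…,u_r)` a basis of `g^{x₋}`, and `p⁽¹⁾,…,p⁽ʳ⁾` homogeneous algebraically independent
generators of `S(g*)^g` with `p⁽ʲ⁾ ∈ S^{k_j}(g*)`, `k_j ≥ 1`, normalized so that
`p⁽ʲ⁾(x₊ + ∑ᵢ cᵢuᵢ) = c_j`): for all `i, j ∈ {1,…,r}`, `λ, ω ∈ Ω₁` and `X ∈ t`
(parametrized as `X = x₊ ⊗ 1 + ∑_{(i,ω)} c_{(i,ω)} u_i ⊗ τ^ω`), one has
`R(p⁽ʲ⁾_ω) = ε_{j,ω}` (i.e. the value of `p⁽ʲ⁾_ω` at `X` is the coordinate `c (j, ω)`)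
and `(D_X(p⁽ʲ⁾_ω))(U_{i,λ}) = δ_{i,j} δ_{λ,ω}`, where `U_{i,λ} = u_i ⊗ τ^λ`. -/
theorem statement14 {F : Type*} [Field F] [CharZero F] [IsAlgClosed F]
    {g : Type*} [LieRing g] [LieAlgebra F g] [FiniteDimensional F g]
    [LieAlgebra.IsSemisimple F g]
    {ℓ : ℕ} (μ : Fin ℓ → ℕ)
    (xp xm h : g)
    (hhp : ⁅h, xp⁆ = 2 • xp) (hhm : ⁅h, xm⁆ = -(2 • xm)) (hpm : ⁅xp, xm⁆ = h)
    (hpreg : isRegular F g xp) (hmreg : isRegular F g xm) (hhreg : isRegular F g h)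
    {ι : Type*} [Fintype ι] (bg : Module.Basis ι F g)
    (bA : Module.Basis ↥(Finset.Iic μ) F (trunc F μ))
    (hbA : ∀ ω : ↥(Finset.Iic μ), bA ω = Ideal.Quotient.mk (truncIdeal F μ)
      (MvPolynomial.monomial (Finsupp.equivFunOnFinite.symm (ω : Fin ℓ → ℕ)) (1 : F)))
    (r : ℕ) (u : Fin r → g)
    (humem : ∀ m, u m ∈ cent F g xm) (huli : LinearIndependent F u)
    (huspan : Submodule.span F (Set.range u) = cent F g xm)
    (k : Fin r → ℕ) (hk : ∀ j, 1 ≤ k j)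
    (p : Fin r → MvPolynomial ι F)
    (hphom : ∀ j, (p j).IsHomogeneous (k j))
    (hpinv : ∀ (j : Fin r) (x : g), extDer (vCoad bg x) (p j) = 0)
    (hpind : AlgebraicIndependent F p)
    (hpgen : Algebra.adjoin F (Set.range p) = invAlg (fun x : g => vCoad bg x))
    (hnorm : ∀ (c : Fin r → F) (j : Fin r),
      eval (fun i => bg.repr (xp + ∑ m, c m • u m) i) (p j) = c j)
    (c : Fin r × ↥(Finset.Iic μ) → F) (Xv : trunc F μ ⊗[F] g)
    (hXv : Xv = (1 : trunc F μ) ⊗ₜ[F] xp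
      + ∑ z : Fin r × ↥(Finset.Iic μ), c z • (bA z.2 ⊗ₜ[F] u z.1))
    (i j : Fin r) (lam om : ↥(Finset.Iic μ)) :
    eval (fun w => (bA.tensorProduct bg).repr Xv w)
        (pAComp F μ (p j) (om : Fin ℓ → ℕ)) = c (j, om)
      ∧ dirDeriv (bA.tensorProduct bg) (pAComp F μ (p j) (om : Fin ℓ → ℕ)) Xv
          (bA lam ⊗ₜ[F] u i)
        = if i = j ∧ lam = om then 1 else 0 := by
  classical
  set B := bA.tensorProduct bg with hB
  set o : ↥(Finset.Iic μ) := ⟨0, Finset.mem_Iic.mpr (zero_le : (0 : Fin ℓ → ℕ) ≤ μ)⟩ with ho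
  have h1A : (1 : trunc F μ) = bA o := by
    rw [hbA o]
    rw [show Finsupp.equivFunOnFinite.symm ((o : Fin ℓ → ℕ)) = 0 from by ext x; simp [ho]]
    simp [MvPolynomial.monomial_zero']
  have hnorm' : ∀ cv : Fin r → F,
      MvPolynomial.eval (fun w => bg.repr (xp + ∑ m, cv m • u m) w) (p j) = cv j :=
    fun cv => hnorm cv j
  have hrepr : ∀ (c' : Fin r × ↥(Finset.Iic μ) → F) (z : ↥(Finset.Iic μ) × ι),
      B.repr ((1 : trunc F μ) ⊗ₜ[F] xp
        + ∑ z' : Fin r × ↥(Finset.Iic μ), c' z' • (bA z'.2 ⊗ₜ[F] u z'.1)) z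
        = (if z.1 = o then bg.repr xp z.2 else 0) + ∑ m, c' (m, z.1) * bg.repr (u m) z.2 := by
    intro c' z
    obtain ⟨γ, w⟩ := z
    rw [h1A, map_add, Finsupp.add_apply]
    congr 1
    · rw [hB, Module.Basis.tensorProduct_repr_tmul_apply, Module.Basis.repr_self, Finsupp.single_apply,
        smul_eq_mul]
      by_cases hoγ : γ = o
      · simp [hoγ]
      · simp only [if_neg hoγ, if_neg (fun hgo : o = γ => hoγ hgo.symm), mul_zero]
    · rw [map_sum, Finsupp.finset_sum_apply, Fintype.sum_prod_type]
      refine Finset.sum_congr rfl fun m _ => ?_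
      have hterm : ∀ γ' : ↥(Finset.Iic μ),
          (B.repr (c' (m, γ') • (bA γ' ⊗ₜ[F] u m))) (γ, w)
          = if γ' = γ then c' (m, γ') * bg.repr (u m) w else 0 := by
        intro γ'
        rw [map_smul, Finsupp.smul_apply, hB, Module.Basis.tensorProduct_repr_tmul_apply,
          Module.Basis.repr_self, Finsupp.single_apply, smul_eq_mul, smul_eq_mul]
        by_cases hg : γ' = γ
        · simp [hg]
        · rw [if_neg hg, if_neg hg, mul_zero, mul_zero]
      rw [Finset.sum_congr rfl fun γ' _ => hterm γ', Finset.sum_ite_eq' Finset.univ γ]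
      simp
  constructor
  · rw [hXv, show (fun w : ↥(Finset.Iic μ) × ι => B.repr ((1 : trunc F μ) ⊗ₜ[F] xp
        + ∑ z' : Fin r × ↥(Finset.Iic μ), c z' • (bA z'.2 ⊗ₜ[F] u z'.1)) w)
      = fun z : ↥(Finset.Iic μ) × ι => (if z.1 = o then bg.repr xp z.2 else 0)
          + ∑ m, c (m, z.1) * bg.repr (u m) z.2
      from funext (hrepr c)]
    exact key_eval bg μ xp u (p j) j hnorm' c om
  · set a : ↥(Finset.Iic μ) × ι → F := fun z => B.repr Xv z with haa
    set b : ↥(Finset.Iic μ) × ι → F := fun z => B.repr (bA lam ⊗ₜ[F] u i) z with hbb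
    set δ : F := if i = j ∧ lam = om then 1 else 0 with hδ
    have hG : ∀ t : F, Polynomial.eval t (MvPolynomial.aeval
        (fun z => Polynomial.C (a z) + Polynomial.C (b z) * Polynomial.X)
        (pAComp F μ (p j) (om : Fin ℓ → ℕ))) = c (j, om) + δ * t := by
      intro t
      rw [aeval_linear_eval]
      have hXtY : Xv + t • (bA lam ⊗ₜ[F] u i)
          = (1 : trunc F μ) ⊗ₜ[F] xp + ∑ z' : Fin r × ↥(Finset.Iic μ),
              (c z' + t * (if z' = (i, lam) then 1 else 0)) • (bA z'.2 ⊗ₜ[F] u z'.1) := by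
        rw [hXv]
        have hsplit : ∀ z' : Fin r × ↥(Finset.Iic μ),
            (c z' + t * (if z' = (i, lam) then 1 else 0)) • (bA z'.2 ⊗ₜ[F] u z'.1)
            = c z' • (bA z'.2 ⊗ₜ[F] u z'.1)
              + (if z' = (i, lam) then t • (bA lam ⊗ₜ[F] u i) else 0) := by
          intro z'
          rcases eq_or_ne z' (i, lam) with rfl | hz
          · simp [add_smul]
          · simp [hz, add_smul]
        rw [Finset.sum_congr rfl fun z' _ => hsplit z', Finset.sum_add_distrib,
          Finset.sum_ite_eq' Finset.univ (i, lam)]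
        simp [add_assoc]
      have hab : (fun z : ↥(Finset.Iic μ) × ι => a z + b z * t)
          = fun z : ↥(Finset.Iic μ) × ι => (if z.1 = o then bg.repr xp z.2 else 0)
              + ∑ m, (c (m, z.1) + t * (if (m, z.1) = (i, lam) then 1 else 0))
                  * bg.repr (u m) z.2 := by
        funext z
        have habz : a z + b z * t = B.repr (Xv + t • (bA lam ⊗ₜ[F] u i)) z := by
          rw [map_add, Finsupp.add_apply, map_smul, Finsupp.smul_apply, smul_eq_mul, haa, hbb]
          ring
        rw [habz, hXtY, hrepr (fun z' => c z' + t * (if z' = (i, lam) then 1 else 0))]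
      rw [hab,
        key_eval bg μ xp u (p j) j hnorm'
          (fun z' => c z' + t * (if z' = (i, lam) then 1 else 0)) om]
      rw [hδ]
      by_cases h1 : i = j <;> by_cases h2 : lam = om <;>
        simp [h1, h2, Prod.ext_iff, eq_comm, mul_comm] <;> tauto
    have hGpoly : (MvPolynomial.aeval
        (fun z => Polynomial.C (a z) + Polynomial.C (b z) * Polynomial.X)
        (pAComp F μ (p j) (om : Fin ℓ → ℕ)))
        = Polynomial.C (c (j, om)) + Polynomial.C δ * Polynomial.X := by
      apply Polynomial.funext
      intro t
      rw [hG t]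
      simp only [Polynomial.eval_add, Polynomial.eval_mul, Polynomial.eval_C, Polynomial.eval_X]
    have hdd : dirDeriv B (pAComp F μ (p j) (om : Fin ℓ → ℕ)) Xv (bA lam ⊗ₜ[F] u i)
        = (MvPolynomial.aeval
            (fun z => Polynomial.C (a z) + Polynomial.C (b z) * Polynomial.X)
            (pAComp F μ (p j) (om : Fin ℓ → ℕ))).coeff 1 :=
      (coeff_one_aeval_linear a b _).symm
    rw [hdd, hGpoly]
    by_cases hc : i = j ∧ lam = om <;> simp [hδ, hc]
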